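/- Let n ≥ 1 and s ≥ 1 be natural numbers, let R and Σ be symmetric positive definite s×s real matrices, and let G be an s×n real matrix. Set W = J_n ⊗ R + I_n ⊗ Σ and H = I_n − (1/n)·J_n. Then vec(G)ᵀ · W⁻¹ · vec(G) = Tr( (Σ + n·R)⁻¹ · G·Gᵀ + ((1/n)·Σ·R⁻¹·Σ + Σ)⁻¹ · G·H·Gᵀ ). -/

import Mathlib

open Matrix
open scoped Kronecker

theorem quad_kron {n s : ℕ} (G : Matrix (Fin s) (Fin n) ℝ)
    (B : Matrix (Fin n) (Fin n) ℝ) (C : Matrix (Fin s) (Fin s) ℝ) :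
    (∑ p : Fin n × Fin s, ∑ q : Fin n × Fin s,
        G p.2 p.1 * (B ⊗ₖ C) p q * G q.2 q.1)
      = Matrix.trace (C * (G * Bᵀ * Gᵀ)) := by
  simp only [Matrix.trace, Matrix.diag, Matrix.mul_apply, Matrix.transpose_apply,
    Matrix.kroneckerMap_apply, Fintype.sum_prod_type, Finset.sum_mul, Finset.mul_sum]
  rw [Finset.sum_comm]
  refine Finset.sum_congr rfl fun j _ => ?_
  refine Eq.trans (Finset.sum_congr rfl fun i _ => Finset.sum_comm) ?_
  rw [Finset.sum_comm]
  exact Finset.sum_congr rfl fun j' _ => Finset.sum_congr rfl fun i _ =>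
    Finset.sum_congr rfl fun i' _ => by ring

theorem stmt1 (n s : ℕ) (hn : 1 ≤ n) (hs : 1 ≤ s)
    (R Sig : Matrix (Fin s) (Fin s) ℝ) (hR : R.PosDef) (hSig : Sig.PosDef)
    (G : Matrix (Fin s) (Fin n) ℝ) :
    let J : Matrix (Fin n) (Fin n) ℝ := Matrix.of fun _ _ => 1
    let W : Matrix (Fin n × Fin s) (Fin n × Fin s) ℝ :=
      J ⊗ₖ R + (1 : Matrix (Fin n) (Fin n) ℝ) ⊗ₖ Sig
    let H : Matrix (Fin n) (Fin n) ℝ := 1 - (1 / (n : ℝ)) • J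
    let v : Fin n × Fin s → ℝ := fun p => G p.2 p.1
    (∑ p : Fin n × Fin s, ∑ q : Fin n × Fin s, v p * W⁻¹ p q * v q)
      = Matrix.trace ((Sig + (n : ℝ) • R)⁻¹ * (G * Gᵀ)
          + ((1 / (n : ℝ)) • (Sig * R⁻¹ * Sig) + Sig)⁻¹ * (G * H * Gᵀ)) := by
  intro J W H v
  have hn0 : (0 : ℝ) < (n : ℝ) := by exact_mod_cast hn
  have hnn : (n : ℝ) ≠ 0 := ne_of_gt hn0
  set P : Matrix (Fin n) (Fin n) ℝ := (1 / (n : ℝ)) • J with hP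
  set A : Matrix (Fin s) (Fin s) ℝ := Sig + (n : ℝ) • R with hA
  have hApd : A.PosDef := by
    refine Matrix.PosDef.of_dotProduct_mulVec_pos ?_ ?_
    · rw [hA]
      show (Sig + (n : ℝ) • R)ᴴ = Sig + (n : ℝ) • R
      rw [conjTranspose_add, conjTranspose_smul]
      rw [hSig.1, hR.1, star_trivial]
    · intro x hx
      have h1 := hSig.dotProduct_mulVec_pos hx
      have h2 := hR.dotProduct_mulVec_pos hx
      rw [hA]
      simp only [Matrix.add_mulVec, Matrix.smul_mulVec, dotProduct_add,
        dotProduct_smul, smul_eq_mul]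
      have := mul_pos hn0 h2
      linarith
  -- basic invertibility facts
  have hSigInv : Sig * Sig⁻¹ = 1 := mul_nonsing_inv _ hSig.det_pos.ne'.isUnit
  have hAInv : A * A⁻¹ = 1 := mul_nonsing_inv _ hApd.det_pos.ne'.isUnit
  have hRInv : R⁻¹ * R = 1 := nonsing_inv_mul _ hR.det_pos.ne'.isUnit
  -- J algebra
  have hJJ : J * J = (n : ℝ) • J := by
    ext i j
    simp [J, Matrix.mul_apply, Matrix.smul_apply]
  have hJP : J * P = J := by
    rw [hP, Matrix.mul_smul, hJJ, smul_smul]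
    rw [one_div, inv_mul_cancel₀ hnn, one_smul]
  have hJH : J * H = 0 := by
    show J * (1 - P) = 0
    rw [Matrix.mul_sub, Matrix.mul_one, hJP, sub_self]
  have hJsymm : Jᵀ = J := by ext i j; simp [J]
  have hPsymm : Pᵀ = P := by rw [hP, Matrix.transpose_smul, hJsymm]
  have hHsymm : Hᵀ = H := by
    show (1 - P)ᵀ = 1 - P
    rw [Matrix.transpose_sub, Matrix.transpose_one, hPsymm]
  have hnP : (n : ℝ) • P = J := by
    rw [hP, smul_smul, mul_one_div, div_self hnn, one_smul]
  -- the inverse of W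
  have hWinv : W⁻¹ = P ⊗ₖ A⁻¹ + H ⊗ₖ Sig⁻¹ := by
    refine Matrix.inv_eq_right_inv ?_
    show (J ⊗ₖ R + (1 : Matrix (Fin n) (Fin n) ℝ) ⊗ₖ Sig) * (P ⊗ₖ A⁻¹ + H ⊗ₖ Sig⁻¹) = 1
    rw [Matrix.add_mul, Matrix.mul_add, Matrix.mul_add,
      ← Matrix.mul_kronecker_mul, ← Matrix.mul_kronecker_mul,
      ← Matrix.mul_kronecker_mul, ← Matrix.mul_kronecker_mul,
      hJP, hJH, Matrix.one_mul, Matrix.one_mul, hSigInv]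
    have hzero : (0 : Matrix (Fin n) (Fin n) ℝ) ⊗ₖ (R * Sig⁻¹) = 0 := by
      ext ⟨i, j⟩ ⟨i', j'⟩; simp
    rw [hzero, add_zero]
    have hJ' : J ⊗ₖ (R * A⁻¹) = P ⊗ₖ ((n : ℝ) • R * A⁻¹) := by
      rw [Matrix.smul_mul, Matrix.kronecker_smul, ← Matrix.smul_kronecker, hnP]
    rw [hJ', ← add_assoc, ← Matrix.kronecker_add, ← Matrix.add_mul,
      add_comm ((n : ℝ) • R) Sig, ← hA, hAInv]
    have h1 : P ⊗ₖ (1 : Matrix (Fin s) (Fin s) ℝ) + H ⊗ₖ 1 = (P + H) ⊗ₖ 1 :=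
      (Matrix.add_kronecker P H 1).symm
    have h2 : P + H = 1 := by show P + (1 - P) = 1; abel
    rw [h1, h2, Matrix.one_kronecker_one]
  -- rewrite LHS via quad_kron
  rw [hWinv]
  have expand : (∑ p : Fin n × Fin s, ∑ q : Fin n × Fin s,
      v p * (P ⊗ₖ A⁻¹ + H ⊗ₖ Sig⁻¹) p q * v q)
      = Matrix.trace (A⁻¹ * (G * Pᵀ * Gᵀ)) + Matrix.trace (Sig⁻¹ * (G * Hᵀ * Gᵀ)) := by
    rw [← quad_kron G P A⁻¹, ← quad_kron G H Sig⁻¹, ← Finset.sum_add_distrib]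
    refine Finset.sum_congr rfl fun p _ => ?_
    rw [← Finset.sum_add_distrib]
    refine Finset.sum_congr rfl fun q _ => ?_
    simp only [Matrix.add_apply]
    ring
  rw [expand, hPsymm, hHsymm]
  -- key inverse identity
  set D : Matrix (Fin s) (Fin s) ℝ := (1 / (n : ℝ)) • (Sig * R⁻¹ * Sig) + Sig with hD
  have hDinv : D⁻¹ = Sig⁻¹ - A⁻¹ := by
    refine Matrix.inv_eq_right_inv ?_
    rw [hD, Matrix.add_mul, Matrix.smul_mul, Matrix.mul_sub, Matrix.mul_sub]
    have h1 : Sig * R⁻¹ * Sig * Sig⁻¹ = Sig * R⁻¹ := by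
      rw [Matrix.mul_assoc, hSigInv, Matrix.mul_one]
    have h2 : Sig * R⁻¹ * Sig * A⁻¹ = Sig * R⁻¹ * (Sig * A⁻¹) := by
      rw [Matrix.mul_assoc]
    rw [h1, h2, hSigInv]
    have key : Sig * R⁻¹ - Sig * R⁻¹ * (Sig * A⁻¹) = (n : ℝ) • (Sig * A⁻¹) := by
      have e0 : Sig * R⁻¹ * (A * A⁻¹) = Sig * R⁻¹ := by rw [hAInv, Matrix.mul_one]
      have e1 : Sig * R⁻¹ * (A * A⁻¹)
          = Sig * R⁻¹ * (Sig * A⁻¹) + (n : ℝ) • (Sig * A⁻¹) := by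
        conv_lhs => rw [hA, Matrix.add_mul, Matrix.mul_add, Matrix.smul_mul,
          Matrix.mul_smul]
        congr 1
        rw [← Matrix.mul_assoc, Matrix.mul_assoc Sig R⁻¹ R, hRInv, Matrix.mul_one, ← hA]
      exact sub_eq_of_eq_add' (e0.symm.trans e1)
    rw [key, smul_smul, one_div, inv_mul_cancel₀ hnn, one_smul]
    abel
  -- finish: trace algebra
  have hGP : G * P * Gᵀ = G * Gᵀ - G * H * Gᵀ := by
    have hPH : P = 1 - H := by
      show P = 1 - (1 - P)
      rw [sub_sub_cancel]
    rw [hPH, Matrix.mul_sub, Matrix.mul_one, Matrix.sub_mul]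
  rw [hGP, hDinv, Matrix.mul_sub, Matrix.sub_mul, Matrix.trace_add, Matrix.trace_sub,
    Matrix.trace_sub]
  abel
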